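/- Pointwise spectral factorization from the discrete algebraic Riccati equation: Let A ∈ ℝ^{n×n}, B ∈ ℝ^{n×m}, C ∈ ℝ^{p×n}, and let P be a real symmetric positive semidefinite matrix satisfying P = A P Aᵀ + B Bᵀ − F R Fᵀ, where R := I + C P Cᵀ and F := A P Cᵀ R⁻¹. Then for every z ∈ ℂ with |z| = 1 such that zI − A is invertible: (I + C(zI − A)⁻¹F) · R · (I + C(zI − A)⁻¹F)* = I + C(zI − A)⁻¹ B Bᵀ ((zI − A)⁻¹)* Cᵀ, where * denotes the conjugate transpose. Moreover, for every z ∈ ℂ such that both zI − A and zI − (A − FC) are invertible: (I + C(zI − A)⁻¹F) · (I − C(zI − (A − FC))⁻¹F) = I. -/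

import Mathlib

open Matrix

noncomputable section

/-- A real matrix viewed as a complex matrix. -/
def cm {a b : Type*} (X : Matrix a b ℝ) : Matrix a b ℂ :=
  X.map Complex.ofReal

lemma cm_mul {a b c : Type*} [Fintype b] (X : Matrix a b ℝ) (Y : Matrix b c ℝ) :
    cm (X * Y) = cm X * cm Y := by
  ext i j
  simp [cm, Matrix.mul_apply]

lemma cm_add {a b : Type*} (X Y : Matrix a b ℝ) : cm (X + Y) = cm X + cm Y := by
  ext i j; simp [cm]

lemma cm_sub {a b : Type*} (X Y : Matrix a b ℝ) : cm (X - Y) = cm X - cm Y := by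
  ext i j; simp [cm]

lemma cm_one {a : Type*} [DecidableEq a] : cm (1 : Matrix a a ℝ) = 1 := by
  ext i j; simp [cm, Matrix.one_apply]; aesop

lemma cm_transpose {a b : Type*} (X : Matrix a b ℝ) : cm Xᵀ = (cm X)ᵀ := rfl

lemma cm_conjTranspose {a b : Type*} (X : Matrix a b ℝ) : (cm X)ᴴ = cm Xᵀ := by
  ext i j; simp [cm, Matrix.conjTranspose_apply, Complex.conj_ofReal]

lemma inv_part {n p : ℕ} (G : Matrix (Fin n) (Fin n) ℂ) (F : Matrix (Fin n) (Fin p) ℂ)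
    (C : Matrix (Fin p) (Fin n) ℂ) (hG : IsUnit G.det) (hH : IsUnit (G + F * C).det) :
    (1 + C * G⁻¹ * F) * (1 - C * (G + F * C)⁻¹ * F) = 1 := by
  set H := G + F * C with hHdef
  have h1 : ∀ X : Matrix (Fin n) (Fin p) ℂ, H * (H⁻¹ * X) = X := fun X =>
    Matrix.mul_nonsing_inv_cancel_left _ _ hH
  have h2 : ∀ X : Matrix (Fin n) (Fin p) ℂ, G⁻¹ * (G * X) = X := fun X =>
    Matrix.nonsing_inv_mul_cancel_left _ _ hG
  have key : F * (C * (H⁻¹ * F)) = F - G * (H⁻¹ * F) := by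
    have h3 : F * (C * (H⁻¹ * F)) = (F * C) * (H⁻¹ * F) := by rw [Matrix.mul_assoc]
    rw [h3, show F * C = H - G by rw [hHdef]; abel, Matrix.sub_mul, h1]
  rw [Matrix.mul_sub, Matrix.add_mul, Matrix.add_mul, Matrix.mul_one, Matrix.mul_one]
  have expand : C * G⁻¹ * F * (C * (H⁻¹ * F)) = C * (G⁻¹ * F) - C * (H⁻¹ * F) := by
    rw [Matrix.mul_assoc, Matrix.mul_assoc, key, Matrix.mul_sub, Matrix.mul_sub, h2]
  simp only [Matrix.mul_assoc] at expand ⊢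
  rw [expand]
  abel_nf
  simp

set_option maxHeartbeats 2000000 in
lemma spec_part {n m p : ℕ} (z : ℂ) (hz : z * star z = 1)
    (A : Matrix (Fin n) (Fin n) ℂ) (B : Matrix (Fin n) (Fin m) ℂ) (C : Matrix (Fin p) (Fin n) ℂ)
    (P : Matrix (Fin n) (Fin n) ℂ) (hPh : Pᴴ = P)
    (R : Matrix (Fin p) (Fin p) ℂ) (hRh : Rᴴ = R) (hR : R = 1 + C * P * Cᴴ)
    (F : Matrix (Fin n) (Fin p) ℂ) (hFR : F * R = A * P * Cᴴ)
    (hD : B * Bᴴ = P - A * P * Aᴴ + F * R * Fᴴ)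
    (hG : IsUnit (z • 1 - A).det) :
    (1 + C * (z • 1 - A)⁻¹ * F) * R * (1 + C * (z • 1 - A)⁻¹ * F)ᴴ
      = 1 + C * (z • 1 - A)⁻¹ * (B * Bᴴ) * ((z • 1 - A)⁻¹)ᴴ * Cᴴ := by
  set G := z • (1 : Matrix (Fin n) (Fin n) ℂ) - A with hGdef
  have hGh : Gᴴ = star z • 1 - Aᴴ := by
    rw [hGdef]; simp
  have hGhu : IsUnit (Gᴴ).det := by
    rw [Matrix.det_conjTranspose]; exact hG.star
  have hGinv : (G⁻¹)ᴴ = (Gᴴ)⁻¹ := Matrix.conjTranspose_nonsing_inv _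
  have c1 : ∀ X : Matrix (Fin n) (Fin p) ℂ, G⁻¹ * (G * X) = X := fun X =>
    Matrix.nonsing_inv_mul_cancel_left _ _ hG
  have c2 : Gᴴ * ((Gᴴ)⁻¹ * Cᴴ) = Cᴴ := Matrix.mul_nonsing_inv_cancel_left _ _ hGhu
  have key : G * (P * Gᴴ) + G * (P * Aᴴ) + A * (P * Gᴴ) = P - A * (P * Aᴴ) := by
    rw [hGdef, hGh]
    have hz' : star z * z = 1 := by rw [mul_comm]; exact hz
    simp only [Matrix.mul_sub, Matrix.sub_mul, Matrix.mul_smul, Matrix.smul_mul, smul_smul,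
      smul_add, smul_sub, hz, hz', one_smul, Matrix.one_mul, Matrix.mul_one]
    abel
  have hBB : B * Bᴴ = G * (P * Gᴴ) + G * (P * Aᴴ) + A * (P * Gᴴ) + F * (R * Fᴴ) := by
    simp only [Matrix.mul_assoc] at hD
    rw [hD, ← key]
  have hFR' : ∀ X : Matrix (Fin p) (Fin p) ℂ, F * (R * X) = A * (P * (Cᴴ * X)) := by
    intro X
    rw [← Matrix.mul_assoc, hFR, Matrix.mul_assoc, Matrix.mul_assoc]
  have hRF : ∀ Y : Matrix (Fin n) (Fin p) ℂ, R * (Fᴴ * Y) = C * (P * (Aᴴ * Y)) := by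
    intro Y
    have h : R * Fᴴ = C * (P * Aᴴ) := by
      rw [← hRh, ← Matrix.conjTranspose_mul, hFR]
      simp [Matrix.conjTranspose_mul, hPh, Matrix.mul_assoc]
    rw [← Matrix.mul_assoc, h, Matrix.mul_assoc, Matrix.mul_assoc]
  have hbridge : ∀ Y : Matrix (Fin n) (Fin p) ℂ,
      F * (C * (P * (Aᴴ * Y))) = A * (P * (Cᴴ * (Fᴴ * Y))) := by
    intro Y
    rw [← hRF, hFR']
  rw [hBB]
  simp only [Matrix.conjTranspose_add, Matrix.conjTranspose_mul, Matrix.conjTranspose_one,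
    hGinv]
  simp only [Matrix.mul_add, Matrix.add_mul, Matrix.mul_one, Matrix.one_mul, Matrix.mul_assoc,
    c1, c2, hFR', hRF, hFR]
  rw [hR]
  simp only [Matrix.add_mul, Matrix.mul_add, Matrix.one_mul, Matrix.mul_one, Matrix.mul_assoc]
  simp only [hbridge]
  abel

/-- Pointwise spectral factorization from the discrete algebraic Riccati equation,
with `R = I + C P Cᵀ` and `F = A P Cᵀ R⁻¹`. -/
theorem stmt_15 {n m p : ℕ} (A : Matrix (Fin n) (Fin n) ℝ) (B : Matrix (Fin n) (Fin m) ℝ)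
    (C : Matrix (Fin p) (Fin n) ℝ) (P : Matrix (Fin n) (Fin n) ℝ) (hP : P.PosSemidef)
    (R : Matrix (Fin p) (Fin p) ℝ) (hR : R = 1 + C * P * Cᵀ)
    (F : Matrix (Fin n) (Fin p) ℝ) (hF : F = A * P * Cᵀ * R⁻¹)
    (hDARE : P = A * P * Aᵀ + B * Bᵀ - F * R * Fᵀ) :
    (∀ z : ℂ, ‖z‖ = 1 →
      IsUnit (z • (1 : Matrix (Fin n) (Fin n) ℂ) - cm A).det →
      ((1 : Matrix (Fin p) (Fin p) ℂ) + cm C * (z • 1 - cm A)⁻¹ * cm F) * cm R *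
          ((1 : Matrix (Fin p) (Fin p) ℂ) + cm C * (z • 1 - cm A)⁻¹ * cm F)ᴴ =
        (1 : Matrix (Fin p) (Fin p) ℂ) +
          cm C * (z • 1 - cm A)⁻¹ * cm B * (cm B)ᵀ * ((z • 1 - cm A)⁻¹)ᴴ * (cm C)ᵀ) ∧
    (∀ z : ℂ,
      IsUnit (z • (1 : Matrix (Fin n) (Fin n) ℂ) - cm A).det →
      IsUnit (z • (1 : Matrix (Fin n) (Fin n) ℂ) - (cm A - cm F * cm C)).det →
      ((1 : Matrix (Fin p) (Fin p) ℂ) + cm C * (z • 1 - cm A)⁻¹ * cm F) *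
          ((1 : Matrix (Fin p) (Fin p) ℂ) -
            cm C * (z • 1 - (cm A - cm F * cm C))⁻¹ * cm F) = 1) := by
  -- real preliminaries
  have hCt : Cᵀ = Cᴴ := by ext i j; simp [Matrix.conjTranspose_apply]
  have hRpd : R.PosDef := by
    rw [hR]
    exact Matrix.PosDef.add_posSemidef Matrix.PosDef.one
      (hCt ▸ hP.mul_mul_conjTranspose_same C)
  have hRu : IsUnit R.det := hRpd.det_pos.ne'.isUnit
  have hFR : F * R = A * P * Cᵀ := by
    rw [hF, Matrix.nonsing_inv_mul_cancel_right _ _ hRu]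
  have hPt : Pᵀ = P := hP.isHermitian.eq
  have hRt : Rᵀ = R := by
    rw [hR]
    simp [Matrix.transpose_add, Matrix.transpose_mul, hPt, Matrix.mul_assoc]
  have hBBr : B * Bᵀ = P - A * P * Aᵀ + F * R * Fᵀ := by
    nth_rewrite 1 [hDARE]
    abel
  -- complex versions
  have hPh : (cm P)ᴴ = cm P := by rw [cm_conjTranspose, hPt]
  have hRh : (cm R)ᴴ = cm R := by rw [cm_conjTranspose, hRt]
  have hRc : cm R = 1 + cm C * cm P * (cm C)ᴴ := by
    rw [hR, cm_add, cm_one, cm_mul, cm_mul, cm_conjTranspose]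
  have hFRc : cm F * cm R = cm A * cm P * (cm C)ᴴ := by
    rw [← cm_mul, hFR, cm_mul, cm_mul, cm_conjTranspose]
  have hDc : cm B * (cm B)ᴴ = cm P - cm A * cm P * (cm A)ᴴ + cm F * cm R * (cm F)ᴴ := by
    rw [cm_conjTranspose, cm_conjTranspose, cm_conjTranspose, ← cm_mul, ← cm_mul, ← cm_mul,
      ← cm_mul, ← cm_mul, hBBr, cm_add, cm_sub]
  constructor
  · intro z hz1 hG
    have hz : z * star z = 1 := by
      rw [show (star z : ℂ) = (starRingEnd ℂ) z from rfl, Complex.mul_conj]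
      norm_cast
      simp [Complex.normSq_eq_norm_sq, hz1]
    have := spec_part z hz (cm A) (cm B) (cm C) (cm P) hPh (cm R) hRh hRc (cm F) hFRc hDc hG
    rw [show (cm B)ᵀ = (cm B)ᴴ by rw [cm_conjTranspose, cm_transpose],
      show (cm C)ᵀ = (cm C)ᴴ by rw [cm_conjTranspose, cm_transpose]]
    calc (1 + cm C * (z • 1 - cm A)⁻¹ * cm F) * cm R * (1 + cm C * (z • 1 - cm A)⁻¹ * cm F)ᴴ
        = 1 + cm C * (z • 1 - cm A)⁻¹ * (cm B * (cm B)ᴴ) * ((z • 1 - cm A)⁻¹)ᴴ * (cm C)ᴴ :=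
          this
      _ = _ := by simp only [Matrix.mul_assoc]
  · intro z hG hH
    have heq : z • (1 : Matrix (Fin n) (Fin n) ℂ) - (cm A - cm F * cm C)
        = (z • 1 - cm A) + cm F * cm C := by abel
    rw [heq]
    rw [heq] at hH
    exact inv_part _ _ _ hG hH
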